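/- arXiv:1809.04658 — 9 statements merged into one kernel-verified Lean document; each statement's English description precedes it below -/
import Mathlib

section
/- A topological space X has the property that every subset is closed or dense if and only if every subset of every proper closed subset of X is closed. -/
open Set Filter Topology

/-- A topological space has the property that every subset is closed or dense iff every
subset of every proper closed subset is closed. -/
theorem closed_or_dense_iff_subsets_of_proper_closed_closed
    {X : Type*} [TopologicalSpace X] :
    (∀ A : Set X, IsClosed A ∨ Dense A) ↔
    (∀ A : Set X, IsClosed A → A ≠ Set.univ → ∀ B ⊆ A, IsClosed B) := by
  constructor
  · intro h A hA hAne B hBA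
    rcases h B with hB | hB
    · exact hB
    · exact absurd (univ_subset_iff.mp (hB.closure_eq ▸ (closure_mono hBA).trans_eq hA.closure_eq : Set.univ ⊆ A)) hAne
  · intro h A
    by_cases hd : closure A = Set.univ
    · exact Or.inr (dense_iff_closure_eq.mpr hd)
    · exact Or.inl (h (closure A) isClosed_closure hd A subset_closure)
end

section
/- The series topology ℕ_{aₙ} is disconnected if and only if ∑_{n∈ℕ} aₙ converges; equivalently, ℕ_{aₙ} is connected if and only if ∑ aₙ diverges. -/
open Set Filter Topology

/-- The topology on `ℕ` whose closed sets are `{A | ∑_{n ∈ A} a n < ∞} ∪ {univ}`. -/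
noncomputable def seriesTopology (a : ℕ → ℝ) : TopologicalSpace ℕ :=
  TopologicalSpace.ofClosed {A : Set ℕ | Summable (A.indicator a) ∨ A = Set.univ}
    (Or.inl (by rw [Set.indicator_empty]; exact summable_zero))
    (fun 𝒮 h𝒮 => by
      by_cases h : ∃ A ∈ 𝒮, Summable (A.indicator a)
      · obtain ⟨A, hA, hsum⟩ := h
        left
        have hsub : ⋂₀ 𝒮 ⊆ A := Set.sInter_subset_of_mem hA
        have h2 := hsum.indicator (⋂₀ 𝒮)
        rwa [Set.indicator_indicator, Set.inter_eq_self_of_subset_left hsub] at h2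
      · right
        push_neg at h
        rw [Set.sInter_eq_univ]
        intro A hA
        rcases h𝒮 hA with hs | h1
        · exact absurd hs (h A hA)
        · exact h1)
    (fun A hA B hB => by
      rcases hA with hA | rfl
      · rcases hB with hB | rfl
        · left
          have hBA : Summable ((B \ A).indicator a) := by
            have h2 := hB.indicator (B \ A)
            rwa [Set.indicator_indicator,
              Set.inter_eq_self_of_subset_left Set.diff_subset] at h2
          have hsum := hA.add hBA
          have heq : (A ∪ B).indicator a = A.indicator a + (B \ A).indicator a := by
            rw [← Set.union_diff_self,
              Set.indicator_union_of_disjoint disjoint_sdiff_self_right]; rfl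
          rw [heq, Pi.add_def]; exact hsum
        · right; rw [Set.union_univ]
      · right; rw [Set.univ_union])

/-- `ℕ_{aₙ}` is disconnected iff `∑ aₙ` converges; equivalently, it is connected iff
`∑ aₙ` diverges. -/
theorem disconnected_iff_summable (a : ℕ → ℝ) (ha : ∀ n, 0 < a n) :
    (¬ @ConnectedSpace ℕ (seriesTopology a) ↔ Summable a) ∧
    (@ConnectedSpace ℕ (seriesTopology a) ↔ ¬ Summable a) := by
  letI := seriesTopology a
  have hopen : ∀ u : Set ℕ, IsOpen u ↔ Summable (uᶜ.indicator a) ∨ uᶜ = Set.univ :=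
    fun u => Iff.rfl
  have key : ¬ ConnectedSpace ℕ ↔ Summable a := by
    constructor
    · intro hnc
      by_contra hns
      apply hnc
      refine { toPreconnectedSpace := ⟨?_⟩, toNonempty := ⟨0⟩ }
      intro u v hu hv huv hun hvn
      by_contra hne
      rw [Set.univ_inter, Set.not_nonempty_iff_eq_empty] at hne
      rw [Set.univ_inter] at hun hvn
      rcases (hopen u).mp hu with hsu | hcu
      · rcases (hopen v).mp hv with hsv | hcv
        · apply hns
          refine Summable.of_nonneg_of_le (fun n => (ha n).le) (fun n => ?_)
            (hsu.add hsv)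
          by_cases hn : n ∈ u
          · have hnv : n ∉ v := fun h => Set.eq_empty_iff_forall_notMem.mp hne n ⟨hn, h⟩
            have : vᶜ.indicator a n = a n := Set.indicator_of_mem (Set.mem_compl hnv) a
            have h0 : 0 ≤ uᶜ.indicator a n :=
              Set.indicator_nonneg (fun m _ => (ha m).le) n
            simp only [Pi.add_apply, this]
            linarith
          · have : uᶜ.indicator a n = a n := Set.indicator_of_mem (Set.mem_compl hn) a
            have h0 : 0 ≤ vᶜ.indicator a n :=
              Set.indicator_nonneg (fun m _ => (ha m).le) n
            simp only [Pi.add_apply, this]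
            linarith
        · rw [Set.compl_univ_iff] at hcv
          rw [hcv] at hvn
          exact hvn.ne_empty rfl
      · rw [Set.compl_univ_iff] at hcu
        rw [hcu] at hun
        exact hun.ne_empty rfl
    · intro hsum hc
      have hclopen : IsClopen ({0} : Set ℕ) := by
        constructor
        · rw [← isOpen_compl_iff, hopen, compl_compl]
          exact Or.inl (hsum.indicator _)
        · rw [hopen]
          exact Or.inl (hsum.indicator _)
      rcases isClopen_iff.mp hclopen with h | h
      · exact (Set.singleton_ne_empty 0) h
      · have : (1 : ℕ) ∈ ({0} : Set ℕ) := h ▸ Set.mem_univ 1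
        simp at this
  exact ⟨key, by rw [← key]; tauto⟩
end

section
/- The series topology ℕ_{aₙ} is Hausdorff if and only if ∑_{n∈ℕ} aₙ converges. -/
open Set Filter Topology

/-- The series topology `ℕ_{aₙ}` is Hausdorff iff `∑ aₙ` converges. -/
theorem t2_iff_summable (a : ℕ → ℝ) (ha : ∀ n, 0 < a n) :
    @T2Space ℕ (seriesTopology a) ↔ Summable a := by
  constructor
  · intro h
    obtain ⟨U, V, hU, hV, h0, h1, hUV⟩ :=
      @T2Space.t2 ℕ (seriesTopology a) h 0 1 (by norm_num)
    have hU' : Summable (Uᶜ.indicator a) ∨ Uᶜ = Set.univ := hU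
    have hV' : Summable (Vᶜ.indicator a) ∨ Vᶜ = Set.univ := hV
    have sU : Summable (Uᶜ.indicator a) := by
      rcases hU' with h' | h'
      · exact h'
      · exact absurd (h' ▸ Set.mem_univ 0 : (0:ℕ) ∈ Uᶜ) (by simpa using h0)
    have sV : Summable (Vᶜ.indicator a) := by
      rcases hV' with h' | h'
      · exact h'
      · exact absurd (h' ▸ Set.mem_univ 1 : (1:ℕ) ∈ Vᶜ) (by simpa using h1)
    have hcover : Uᶜ ∪ Vᶜ = Set.univ := by
      rw [← Set.compl_inter, Set.disjoint_iff_inter_eq_empty.mp hUV, Set.compl_empty]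
    refine Summable.of_nonneg_of_le (fun n => (ha n).le)
      (fun n => ?_) (sU.add sV)
    have hn : n ∈ Uᶜ ∪ Vᶜ := hcover ▸ Set.mem_univ n
    rcases hn with hn | hn
    · calc a n = Uᶜ.indicator a n := (Set.indicator_of_mem hn a).symm
        _ ≤ Uᶜ.indicator a n + Vᶜ.indicator a n := by
            have := Set.indicator_nonneg (fun m _ => (ha m).le) (s := Vᶜ) n
            linarith
    · calc a n = Vᶜ.indicator a n := (Set.indicator_of_mem hn a).symm
        _ ≤ Uᶜ.indicator a n + Vᶜ.indicator a n := by
            have := Set.indicator_nonneg (fun m _ => (ha m).le) (s := Uᶜ) n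
            linarith
  · intro hsum
    letI := seriesTopology a
    exact ⟨fun x y hxy => ⟨{x}, {y}, Or.inl (hsum.indicator _),
      Or.inl (hsum.indicator _), rfl, rfl, Set.disjoint_singleton.mpr hxy⟩⟩
end

section
/- The series topology ℕ_{aₙ} is compact if and only if inf{aₙ : n ∈ ℕ} > 0. -/
open Set Filter Topology

section Aux

private lemma aux_step (a : ℕ → ℝ) (h : ∀ ε : ℝ, 0 < ε → ∃ n, a n < ε) (k : ℕ) (c : ℝ) (hc : 0 < c) : ∃ n, a n < min c ((1/2)^(k+2)) :=
  h _ (lt_min hc (by positivity))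

private noncomputable def auxb (a : ℕ → ℝ) (ha : ∀ n, 0 < a n) (h : ∀ ε : ℝ, 0 < ε → ∃ n, a n < ε) : ℕ → ℕ
  | 0 => (h (1/2) (by norm_num)).choose
  | (k+1) => (aux_step a h k (a (auxb a ha h k)) (ha _)).choose

set_option maxHeartbeats 1000000 in
private lemma aux_seq (a : ℕ → ℝ) (ha : ∀ n, 0 < a n) (h : ∀ ε : ℝ, 0 < ε → ∃ n, a n < ε) :
    ∃ b : ℕ → ℕ, Function.Injective b ∧ Summable (a ∘ b) := by
  set b := auxb a ha h with hbdef
  have hb0 : a (b 0) < 1/2 := (h (1/2) (by norm_num)).choose_spec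
  have hbs : ∀ k, a (b (k+1)) < min (a (b k)) ((1/2)^(k+2)) :=
    fun k => (aux_step a h k (a (b k)) (ha _)).choose_spec
  have hanti : StrictAnti (a ∘ b) :=
    strictAnti_nat_of_succ_lt (fun k => (hbs k).trans_le (min_le_left _ _))
  have hbound : ∀ k, a (b k) < (1/2)^(k+1) := by
    intro k
    cases k with
    | zero => simpa using hb0
    | succ k => exact (hbs k).trans_le (min_le_right _ _)
  refine ⟨b, Function.Injective.of_comp (f := a) hanti.injective, ?_⟩
  refine Summable.of_nonneg_of_le (fun k => (ha _).le) (fun k => (hbound k).le) ?_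
  exact (summable_nat_add_iff 1).2
    (summable_geometric_of_lt_one (by norm_num : (0:ℝ) ≤ 1/2) (by norm_num))

end Aux

/-- The series topology `ℕ_{aₙ}` is compact iff `inf {aₙ} > 0`. -/
theorem compact_iff_inf_pos (a : ℕ → ℝ) (ha : ∀ n, 0 < a n) :
    @CompactSpace ℕ (seriesTopology a) ↔ 0 < ⨅ n, a n := by
  letI := seriesTopology a
  have hopen : ∀ s : Set ℕ, IsOpen s ↔ (Summable (sᶜ.indicator a) ∨ sᶜ = univ) :=
    fun s => Iff.rfl
  have hbdd : BddBelow (Set.range a) := ⟨0, fun x ⟨n, hn⟩ => hn ▸ (ha n).le⟩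
  constructor
  · intro hcs
    by_contra hinf
    push_neg at hinf
    have h : ∀ ε : ℝ, 0 < ε → ∃ n, a n < ε := fun ε hε =>
      exists_lt_of_ciInf_lt (lt_of_le_of_lt hinf hε)
    obtain ⟨b, hbinj, hbsum⟩ := aux_seq a ha h
    -- range b has summable indicator
    have hsum : Summable ((Set.range b).indicator a) := by
      rw [← Function.Injective.summable_iff hbinj
        (fun x hx => Set.indicator_of_notMem hx a)]
      refine hbsum.congr fun k => ?_
      simp [Set.indicator_of_mem (Set.mem_range_self k)]
    set U : ℕ → Set ℕ := fun k => (b '' Set.Ici k)ᶜ with hU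
    have hUopen : ∀ k, IsOpen (U k) := by
      intro k
      rw [hopen]
      left
      rw [compl_compl]
      have h2 := hsum.indicator (b '' Set.Ici k)
      rwa [Set.indicator_indicator,
        Set.inter_eq_self_of_subset_left (Set.image_subset_range _ _)] at h2
    have hcover : (Set.univ : Set ℕ) ⊆ ⋃ k, U k := by
      intro m _
      by_cases hm : m ∈ Set.range b
      · obtain ⟨j, rfl⟩ := hm
        refine Set.mem_iUnion.2 ⟨j+1, ?_⟩
        intro hmem
        obtain ⟨i, hi, hib⟩ := hmem
        have := hbinj hib
        rw [Set.mem_Ici] at hi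
        omega
      · exact Set.mem_iUnion.2 ⟨0, fun hmem => hm (Set.image_subset_range _ _ hmem)⟩
    obtain ⟨t, ht⟩ := isCompact_univ.elim_finite_subcover U hUopen hcover
    have := ht (Set.mem_univ (b (t.sup id + 1)))
    obtain ⟨k, hk, hmem⟩ := Set.mem_iUnion₂.1 this
    refine hmem ⟨t.sup id + 1, Set.mem_Ici.2 ?_, rfl⟩
    have : k ≤ t.sup id := Finset.le_sup (f := id) hk
    omega
  · intro hinf
    -- summable indicator sets are finite
    have hfin : ∀ A : Set ℕ, Summable (A.indicator a) → A.Finite := by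
      intro A hsum
      have htend := hsum.tendsto_cofinite_zero
      have hmem : {n : ℕ | A.indicator a n < ⨅ n, a n} ∈ Filter.cofinite :=
        htend ((tendsto_id : Tendsto id (𝓝 (0:ℝ)) _).eventually_lt_const hinf : ∀ᶠ x in 𝓝 (0:ℝ), x < ⨅ n, a n)
      refine Set.Finite.subset hmem ?_
      intro n hn
      simp only [Set.mem_compl_iff, Set.mem_setOf_eq, not_lt]
      rw [Set.indicator_of_mem hn]
      exact ciInf_le hbdd n
    constructor
    classical
    refine isCompact_of_finite_subcover fun {ι} U hUopen hcover => ?_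
    obtain ⟨i₀, hi₀⟩ := Set.mem_iUnion.1 (hcover (Set.mem_univ 0))
    have hC : ((U i₀)ᶜ).Finite := by
      rcases (hopen (U i₀)).1 (hUopen i₀) with hs | hs
      · exact hfin _ hs
      · exact absurd hi₀ (hs.symm ▸ Set.mem_univ 0 : (0:ℕ) ∈ (U i₀)ᶜ)
    choose f hf using fun m => Set.mem_iUnion.1 (hcover (Set.mem_univ m))
    refine ⟨insert i₀ (hC.toFinset.image f), fun m _ => ?_⟩
    by_cases hm : m ∈ U i₀
    · exact Set.mem_biUnion (Finset.mem_insert_self _ _) hm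
    · exact Set.mem_biUnion
        (Finset.mem_insert_of_mem (Finset.mem_image_of_mem f (hC.mem_toFinset.2 hm))) (hf m)
end

section
/- If X is a compact connected Hausdorff space (a continuum), then every continuous map f : X → ℕ_{aₙ} is constant. -/
open Set Filter Topology

/-- Boundary-bumping style step lemma: in a compact Hausdorff preconnected space,
given disjoint closed sets `A` (nonempty) and `B`, and a point `x ∈ B`, there is a
closed preconnected set `M` containing `x`, disjoint from `A`, containing a point
outside `A ∪ B`. -/
lemma step_lemma {Y : Type*} [TopologicalSpace Y] [CompactSpace Y] [T2Space Y]
    [PreconnectedSpace Y] {A B : Set Y} (hA : IsClosed A) (hB : IsClosed B)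
    (hAB : Disjoint A B) (hAne : A.Nonempty) {x : Y} (hxB : x ∈ B) :
    ∃ M : Set Y, IsClosed M ∧ IsPreconnected M ∧ Disjoint M A ∧ x ∈ M ∧
      ∃ y ∈ M, y ∉ A ∧ y ∉ B := by
  -- normality: open U ⊇ B with closure U disjoint from A
  obtain ⟨V, U, hVo, hUo, hAV, hBU, hVU⟩ := normal_separation hA hB hAB
  have hclU : closure U ∩ A = ∅ := by
    have h1 : closure U ⊆ Vᶜ := closure_minimal (fun y hy => (hVU.subset_compl_left) hy)
      hVo.isClosed_compl
    have := hAV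
    ext y; simp only [mem_inter_iff, mem_empty_iff_false, iff_false]
    rintro ⟨hy1, hy2⟩; exact h1 hy1 (hAV hy2)
  set K := closure U with hK
  have hKc : IsCompact K := isClosed_closure.isCompact
  haveI : CompactSpace K := isCompact_iff_compactSpace.mp hKc
  have hxU : x ∈ U := hBU hxB
  have hxK : x ∈ K := subset_closure hxU
  set x' : K := ⟨x, hxK⟩
  set c : Set K := connectedComponent x' with hc
  -- the frontier inside K
  set Fr : Set K := Subtype.val ⁻¹' (frontier U) with hFr
  have hFrc : IsClosed Fr := isClosed_frontier.preimage continuous_subtype_val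
  have hmeet : (c ∩ Fr).Nonempty := by
    by_contra hne
    rw [not_nonempty_iff_eq_empty] at hne
    -- use clopen characterization and compactness
    have hcc := connectedComponent_eq_iInter_isClopen x'
    have hemp : Fr ∩ ⋂ (Z : { Z : Set K // IsClopen Z ∧ x' ∈ Z }), Z = ∅ := by
      rw [← hcc, inter_comm]; exact hne
    obtain ⟨u, hu⟩ := hFrc.isCompact.elim_finite_subfamily_closed _
      (fun Z : { Z : Set K // IsClopen Z ∧ x' ∈ Z } => Z.2.1.isClosed) hemp
    set V' : Set K := ⋂ Z ∈ u, (Z : Set K) with hV'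
    have hV'clopen : IsClopen V' := isClopen_biInter_finset fun Z _ => Z.2.1
    have hxV' : x' ∈ V' := mem_iInter₂.mpr fun Z _ => Z.2.2
    have hV'Fr : V' ∩ Fr = ∅ := by
      rw [inter_comm]; exact hu
    -- push to Y
    set W : Set Y := Subtype.val '' V' with hW
    have hWK : W ⊆ K := by rintro y ⟨z, _, rfl⟩; exact z.2
    have hWU : W ⊆ U := by
      intro y hy
      have hyK : y ∈ K := hWK hy
      by_contra hyU
      have : y ∈ frontier U := by
        rw [hUo.frontier_eq]; exact ⟨hyK, hyU⟩
      obtain ⟨z, hz, rfl⟩ := hy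
      have : z ∈ V' ∩ Fr := ⟨hz, this⟩
      rw [hV'Fr] at this; exact this
    have hWclosed : IsClosed W :=
      (hV'clopen.isClosed.isCompact.image continuous_subtype_val).isClosed
    have hWopen : IsOpen W := by
      obtain ⟨W0, hW0o, hW0⟩ := hV'clopen.isOpen
      have : W = W0 ∩ U := by
        apply Subset.antisymm
        · intro y hy
          obtain ⟨z, hz, rfl⟩ := hy
          have : z ∈ Subtype.val ⁻¹' W0 := by rw [hW0]; exact hz
          exact ⟨this, hWU ⟨z, hz, rfl⟩⟩
        · rintro y ⟨hy0, hyU⟩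
          refine ⟨⟨y, subset_closure hyU⟩, ?_, rfl⟩
          rw [← hW0]; exact hy0
      rw [this]; exact hW0o.inter hUo
    have hWuniv : W = univ := IsClopen.eq_univ ⟨hWclosed, hWopen⟩ ⟨x, ⟨x', hxV', rfl⟩⟩
    obtain ⟨a0, ha0⟩ := hAne
    have : a0 ∈ closure U ∩ A := ⟨subset_closure (hWU (hWuniv ▸ mem_univ a0)), ha0⟩
    rw [hclU] at this; exact this
  obtain ⟨z, hzc, hzFr⟩ := hmeet
  refine ⟨Subtype.val '' c, ?_, ?_, ?_, ⟨x', mem_connectedComponent, rfl⟩, z, ⟨z, hzc, rfl⟩, ?_, ?_⟩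
  · exact (isClosed_connectedComponent.isCompact.image continuous_subtype_val).isClosed
  · exact isPreconnected_connectedComponent.image _ continuous_subtype_val.continuousOn
  · rw [disjoint_iff_inter_eq_empty]
    have : Subtype.val '' c ⊆ K := by rintro y ⟨w, _, rfl⟩; exact w.2
    rw [← subset_empty_iff, ← hclU]
    exact fun y hy => ⟨this hy.1, hy.2⟩
  · intro hzA
    have : (z : Y) ∈ closure U ∩ A := ⟨z.2, hzA⟩
    rw [hclU] at this; exact this
  · intro hzB
    have hzU : (z : Y) ∈ U := hBU hzB
    have : (z : Y) ∈ frontier U := hzFr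
    rw [hUo.frontier_eq] at this
    exact this.2 hzU

/-- Transfer of `step_lemma` to a compact preconnected subset of an ambient T2 space. -/
lemma step_lemma' {X : Type*} [TopologicalSpace X] [T2Space X] {C A B : Set X}
    (hC : IsCompact C) (hCc : IsPreconnected C) (hA : IsClosed A) (hB : IsClosed B)
    (hAB : Disjoint A B) (hAC : (A ∩ C).Nonempty) {x : X} (hxB : x ∈ B) (hxC : x ∈ C) :
    ∃ M : Set X, M ⊆ C ∧ IsCompact M ∧ IsPreconnected M ∧ Disjoint M A ∧ x ∈ M ∧
      ∃ y ∈ M, y ∉ A ∧ y ∉ B := by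
  haveI : CompactSpace C := isCompact_iff_compactSpace.mp hC
  haveI : PreconnectedSpace C := Subtype.preconnectedSpace hCc
  set A' : Set C := Subtype.val ⁻¹' A
  set B' : Set C := Subtype.val ⁻¹' B
  have hA' : IsClosed A' := hA.preimage continuous_subtype_val
  have hB' : IsClosed B' := hB.preimage continuous_subtype_val
  have hAB' : Disjoint A' B' := hAB.preimage _
  have hAne' : A'.Nonempty := by
    obtain ⟨a0, ha0A, ha0C⟩ := hAC
    exact ⟨⟨a0, ha0C⟩, ha0A⟩
  obtain ⟨M', hM'cl, hM'pc, hM'A, hxM', y', hy'M, hy'A, hy'B⟩ :=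
    step_lemma hA' hB' hAB' hAne' (x := (⟨x, hxC⟩ : C)) hxB
  refine ⟨Subtype.val '' M', ?_, ?_, ?_, ?_, ⟨⟨x, hxC⟩, hxM', rfl⟩, y', ⟨y', hy'M, rfl⟩,
    hy'A, hy'B⟩
  · rintro z ⟨w, _, rfl⟩; exact w.2
  · exact hM'cl.isCompact.image continuous_subtype_val
  · exact hM'pc.image _ continuous_subtype_val.continuousOn
  · rw [disjoint_iff_inter_eq_empty]
    ext z; simp only [mem_inter_iff, mem_empty_iff_false, iff_false]
    rintro ⟨⟨w, hw, rfl⟩, hzA⟩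
    exact hM'A.ne_of_mem hw hzA rfl

/-- Sierpiński's theorem: a continuum cannot be partitioned into countably many
pairwise disjoint nonempty closed sets (more than one). -/
theorem sierpinski {X : Type*} [TopologicalSpace X] [CompactSpace X] [T2Space X]
    [ConnectedSpace X] (F : ℕ → Set X) (hcl : ∀ n, IsClosed (F n))
    (hdisj : Pairwise (Function.onFun Disjoint F)) (hcov : ⋃ n, F n = univ)
    {i j : ℕ} (hi : (F i).Nonempty) (hj : (F j).Nonempty) : i = j := by
  by_contra hij
  -- invariant
  set Inv : Set X → Prop := fun C =>
    IsCompact C ∧ IsPreconnected C ∧ ∃ p q, p ≠ q ∧ (C ∩ F p).Nonempty ∧ (C ∩ F q).Nonempty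
    with hInv
  have key : ∀ C : Set X, Inv C → ∀ m : ℕ, ∃ C' : Set X,
      C' ⊆ C ∧ Inv C' ∧ Disjoint C' (F m) := by
    rintro C ⟨hCc, hCpc, p, q, hpq, hp, hq⟩ m
    by_cases hm : Disjoint C (F m)
    · exact ⟨C, Subset.rfl, ⟨hCc, hCpc, p, q, hpq, hp, hq⟩, hm⟩
    · -- pick an index j' ∈ {p, q} with j' ≠ m
      obtain ⟨j', hj'm, hj'C⟩ : ∃ j', j' ≠ m ∧ (C ∩ F j').Nonempty := by
        rcases eq_or_ne p m with rfl | hpm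
        · exact ⟨q, fun h => hpq h.symm, hq⟩
        · exact ⟨p, hpm, hp⟩
      have hmC : ((F m) ∩ C).Nonempty := by
        rw [Set.not_disjoint_iff] at hm
        obtain ⟨z, hz1, hz2⟩ := hm
        exact ⟨z, hz2, hz1⟩
      obtain ⟨x, hxC, hxj'⟩ := hj'C
      obtain ⟨M, hMC, hMc, hMpc, hMA, hxM, y, hyM, hyA, hyB⟩ :=
        step_lemma' hCc hCpc (hcl m) (hcl j') (hdisj (Ne.symm hj'm)) hmC hxj' hxC
      obtain ⟨k, hk⟩ : ∃ k, y ∈ F k := by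
        have : y ∈ ⋃ n, F n := hcov ▸ mem_univ y
        exact mem_iUnion.mp this
      have hkm : k ≠ m := fun h => hyA (h ▸ hk)
      have hkj' : k ≠ j' := fun h => hyB (h ▸ hk)
      exact ⟨M, hMC, ⟨hMc, hMpc, j', k, fun h => hkj' h.symm,
        ⟨x, hxM, hxj'⟩, ⟨y, hyM, hk⟩⟩, hMA⟩
  have hInvUniv : Inv univ := by
    refine ⟨isCompact_univ, isPreconnected_univ, i, j, hij, ?_, ?_⟩
    · obtain ⟨z, hz⟩ := hi; exact ⟨z, mem_univ z, hz⟩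
    · obtain ⟨z, hz⟩ := hj; exact ⟨z, mem_univ z, hz⟩
  -- build the chain
  have key' : ∀ s : {C : Set X // Inv C}, ∀ m : ℕ,
      ∃ t : {C : Set X // Inv C}, t.1 ⊆ s.1 ∧ Disjoint t.1 (F m) := by
    rintro ⟨C, hC⟩ m
    obtain ⟨C', h1, h2, h3⟩ := key C hC m
    exact ⟨⟨C', h2⟩, h1, h3⟩
  choose g hg1 hg2 using key'
  set D : ℕ → {C : Set X // Inv C} := fun n =>
    Nat.rec (g ⟨univ, hInvUniv⟩ 0) (fun n d => g d (n + 1)) n with hD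
  have hDsub : ∀ n, (D (n + 1)).1 ⊆ (D n).1 := fun n => hg1 (D n) (n + 1)
  have hDdisj : ∀ n, Disjoint (D n).1 (F n) := by
    intro n
    cases n with
    | zero => exact hg2 ⟨univ, hInvUniv⟩ 0
    | succ n => exact hg2 (D n) (n + 1)
  have hne : ∀ n, (D n).1.Nonempty := by
    intro n
    obtain ⟨_, _, p, q, _, hp, _⟩ := (D n).2
    exact ⟨hp.choose, hp.choose_spec.1⟩
  have hint : (⋂ n, (D n).1).Nonempty :=
    IsCompact.nonempty_iInter_of_sequence_nonempty_isCompact_isClosed _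
      hDsub hne (D 0).2.1 (fun n => (D n).2.1.isClosed)
  obtain ⟨z, hz⟩ := hint
  obtain ⟨m, hm⟩ : ∃ m, z ∈ F m := mem_iUnion.mp (hcov ▸ mem_univ z)
  exact Set.disjoint_left.mp (hDdisj m) (Set.mem_iInter.mp hz m) hm

lemma isClosed_singleton_series (a : ℕ → ℝ) (n : ℕ) :
    @IsClosed ℕ (seriesTopology a) {n} := by
  letI := seriesTopology a
  rw [← isOpen_compl_iff]
  show ({n}ᶜᶜ : Set ℕ) ∈ {A : Set ℕ | Summable (A.indicator a) ∨ A = Set.univ}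
  rw [compl_compl]
  left
  apply summable_of_ne_finset_zero (s := {n})
  intro m hm
  simp only [Finset.mem_singleton] at hm
  exact Set.indicator_of_notMem (by simpa using hm) a

/-- Every continuous map from a continuum (compact connected Hausdorff space)
to `ℕ_{aₙ}` is constant. -/
theorem continuous_of_continuum_constant (a : ℕ → ℝ) (ha : ∀ n, 0 < a n)
    {X : Type*} [TopologicalSpace X] [CompactSpace X] [ConnectedSpace X] [T2Space X]
    (f : X → ℕ) (hf : @Continuous X ℕ _ (seriesTopology a) f) : ∃ c, ∀ x, f x = c := by
  obtain ⟨x₀⟩ : Nonempty X := inferInstance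
  refine ⟨f x₀, fun x => ?_⟩
  set F : ℕ → Set X := fun n => f ⁻¹' {n} with hF
  have hcl : ∀ n, IsClosed (F n) := fun n =>
    @IsClosed.preimage X ℕ _ (seriesTopology a) f hf {n} (isClosed_singleton_series a n)
  have hdisj : Pairwise (Function.onFun Disjoint F) := by
    intro m n hmn
    rw [Function.onFun, Set.disjoint_iff_inter_eq_empty]
    ext z
    simp only [hF, Set.mem_inter_iff, Set.mem_preimage, Set.mem_singleton_iff,
      Set.mem_empty_iff_false, iff_false]
    rintro ⟨rfl, h2⟩; exact hmn h2
  have hcov : ⋃ n, F n = Set.univ := by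
    ext z; simp [hF]
  exact sierpinski F hcl hdisj hcov ⟨x, rfl⟩ ⟨x₀, rfl⟩
end

section
/- If ∑_{n∈ℕ} aₙ diverges and Y is a metrizable topological space, then every continuous function f : ℕ_{aₙ} → Y is constant. -/
open Set Filter Topology

/-- If `∑ aₙ` diverges, every continuous function from `ℕ_{aₙ}` to a metrizable space
is constant. -/
theorem continuous_to_metrizable_constant (a : ℕ → ℝ) (ha : ∀ n, 0 < a n)
    (hdiv : ¬ Summable a) {Y : Type*} [TopologicalSpace Y]
    [TopologicalSpace.MetrizableSpace Y] (f : ℕ → Y)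
    (hf : @Continuous ℕ Y (seriesTopology a) _ f) : ∃ c, ∀ n, f n = c := by
  letI : MetricSpace Y := TopologicalSpace.metrizableSpaceMetric Y
  refine ⟨f 0, fun m => ?_⟩
  by_contra hne
  set d := dist (f 0) (f m) with hd
  have hdpos : 0 < d := dist_pos.mpr fun h => hne h.symm
  obtain ⟨r, hr, hrange⟩ : ∃ r ∈ Ioo (0 : ℝ) d, r ∉ range (fun n => dist (f 0) (f n)) := by
    have : (Ioo (0 : ℝ) d \ range (fun n => dist (f 0) (f n))).Nonempty := by
      refine diff_nonempty.2 fun hsub => ?_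
      have : (Ioo (0 : ℝ) d).Countable := (countable_range _).mono hsub
      rw [← Cardinal.le_aleph0_iff_set_countable, Cardinal.mk_Ioo_real hdpos] at this
      exact this.not_gt Cardinal.aleph0_lt_continuum
    obtain ⟨r, hr1, hr2⟩ := this
    exact ⟨r, hr1, hr2⟩
  have hopen := (@continuous_def ℕ Y (seriesTopology a) _ f).mp hf
  set U : Set ℕ := f ⁻¹' (Metric.ball (f 0) r) with hU
  have hUopen : IsOpen[seriesTopology a] U := hopen _ Metric.isOpen_ball
  have hVopen : IsOpen[seriesTopology a] Uᶜ := by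
    have heq : Uᶜ = f ⁻¹' (Metric.closedBall (f 0) r)ᶜ := by
      ext n
      simp only [hU, mem_compl_iff, mem_preimage, Metric.mem_ball, Metric.mem_closedBall,
        not_lt, not_le]
      constructor
      · intro h
        rcases h.lt_or_eq with h' | h'
        · exact h'
        · refine absurd (mem_range.mpr ⟨n, ?_⟩) hrange
          show dist (f 0) (f n) = r
          rw [dist_comm]
          exact h'.symm
      · exact le_of_lt
    rw [heq]
    exact hopen _ Metric.isClosed_closedBall.isOpen_compl
  have hUc : Summable (Uᶜ.indicator a) ∨ Uᶜ = Set.univ := hUopen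
  have hUcc : Summable ((Uᶜᶜ).indicator a) ∨ Uᶜᶜ = Set.univ := hVopen
  have h0U : (0 : ℕ) ∈ U := Metric.mem_ball_self hr.1
  have hmV : m ∈ Uᶜ := by
    intro h
    have h2 : dist (f m) (f 0) < r := h
    rw [dist_comm] at h2
    exact lt_irrefl _ (h2.trans hr.2)
  have hUne : Uᶜ ≠ Set.univ := fun h => (h ▸ mem_univ 0 : (0 : ℕ) ∈ Uᶜ) h0U
  have hUcne : Uᶜᶜ ≠ Set.univ := fun h => (h ▸ mem_univ m : m ∈ Uᶜᶜ) hmV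
  have h1 : Summable (Uᶜ.indicator a) := hUc.resolve_right hUne
  have h2 : Summable (U.indicator a) := by
    have := hUcc.resolve_right hUcne
    rwa [compl_compl] at this
  exact hdiv ((h2.add h1).congr fun b => congrFun (Set.indicator_self_add_compl U a) b)
end

section
/- If ∑_{n∈ℕ} aₙ diverges and f : ℕ_{aₙ} → ℕ_{bₙ} is continuous and non-constant, then the image f(ℕ) is dense in ℕ_{bₙ}; in particular f(ℕ) is infinite. -/
open Set Filter Topology

lemma isClosed_seriesTopology_iff (a : ℕ → ℝ) (s : Set ℕ) :
    @IsClosed ℕ (seriesTopology a) s ↔ Summable (s.indicator a) ∨ s = Set.univ := by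
  have h : @IsClosed ℕ (seriesTopology a) s ↔ @IsOpen ℕ (seriesTopology a) sᶜ :=
    (@isOpen_compl_iff ℕ s (seriesTopology a)).symm
  rw [h]
  show sᶜᶜ ∈ _ ↔ _
  rw [compl_compl]
  exact Iff.rfl

lemma key_not_summable (a b : ℕ → ℝ) (hdiv : ¬ Summable a) (f : ℕ → ℕ)
    (hf : @Continuous ℕ ℕ (seriesTopology a) (seriesTopology b) f)
    (hnc : ¬ ∃ c, ∀ n, f n = c) (C : Set ℕ) (hrange : Set.range f ⊆ C)
    (hC : Summable (C.indicator b)) : False := by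
  push_neg at hnc
  obtain ⟨k, hk⟩ := hnc (f 0)
  set m := f 0 with hm
  -- C \ {m} is summable, hence closed
  have hD : Summable ((C \ {m}).indicator b) := by
    have h2 := hC.indicator (C \ {m})
    rwa [Set.indicator_indicator,
      Set.inter_eq_self_of_subset_left Set.diff_subset] at h2
  have hDclosed : @IsClosed ℕ (seriesTopology b) (C \ {m}) :=
    (isClosed_seriesTopology_iff b _).mpr (Or.inl hD)
  have hpreD : @IsClosed ℕ (seriesTopology a) (f ⁻¹' (C \ {m})) :=
    @IsClosed.preimage ℕ ℕ (seriesTopology a) (seriesTopology b) f hf _ hDclosed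
  have hpre_eq : f ⁻¹' (C \ {m}) = (f ⁻¹' {m})ᶜ := by
    ext n
    simp only [Set.mem_preimage, Set.mem_diff, Set.mem_singleton_iff, Set.mem_compl_iff]
    exact ⟨fun h => h.2, fun h => ⟨hrange (Set.mem_range_self n), h⟩⟩
  rw [hpre_eq] at hpreD
  -- {m} is summable, hence closed
  have hmsum : Summable (({m} : Set ℕ).indicator b) := by
    apply summable_of_ne_finset_zero (s := {m})
    intro n hn
    exact Set.indicator_of_notMem (by simpa using hn) b
  have hmclosed : @IsClosed ℕ (seriesTopology b) ({m} : Set ℕ) :=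
    (isClosed_seriesTopology_iff b _).mpr (Or.inl hmsum)
  have hpreF : @IsClosed ℕ (seriesTopology a) (f ⁻¹' {m}) :=
    @IsClosed.preimage ℕ ℕ (seriesTopology a) (seriesTopology b) f hf _ hmclosed
  -- both the fiber and its complement are proper, hence summable
  have hFsum : Summable ((f ⁻¹' {m}).indicator a) := by
    rcases (isClosed_seriesTopology_iff a _).mp hpreF with h | h
    · exact h
    · exact absurd (h ▸ Set.mem_univ k : k ∈ f ⁻¹' {m}) hk
  have hFcsum : Summable (((f ⁻¹' {m})ᶜ).indicator a) := by
    rcases (isClosed_seriesTopology_iff a _).mp hpreD with h | h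
    · exact h
    · have h0 : (0 : ℕ) ∈ (f ⁻¹' {m})ᶜ := h ▸ Set.mem_univ 0
      exact absurd rfl h0
  have : Summable a := by
    have := hFsum.add hFcsum
    rwa [← Pi.add_def, Set.indicator_self_add_compl] at this
  exact hdiv this

/-- If `∑ aₙ` diverges and `f : ℕ_{aₙ} → ℕ_{bₙ}` is continuous and non-constant,
then the image of `f` is dense in `ℕ_{bₙ}`; in particular it is infinite. -/
theorem image_dense_of_nonconstant_continuous (a b : ℕ → ℝ)
    (ha : ∀ n, 0 < a n) (hb : ∀ n, 0 < b n) (hdiv : ¬ Summable a)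
    (f : ℕ → ℕ) (hf : @Continuous ℕ ℕ (seriesTopology a) (seriesTopology b) f)
    (hnc : ¬ ∃ c, ∀ n, f n = c) :
    @Dense ℕ (seriesTopology b) (Set.range f) ∧ (Set.range f).Infinite := by
  constructor
  · letI : TopologicalSpace ℕ := seriesTopology b
    intro x
    have hcl : IsClosed (closure (Set.range f)) := isClosed_closure
    rcases (isClosed_seriesTopology_iff b _).mp hcl with h | h
    · exact absurd h fun h => key_not_summable a b hdiv f hf hnc _
        subset_closure h |>.elim
    · exact h ▸ Set.mem_univ x
  · by_contra hninf
    rw [Set.not_infinite] at hninf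
    have hfin := hninf
    refine key_not_summable a b hdiv f hf hnc (Set.range f) subset_rfl ?_
    apply summable_of_ne_finset_zero (s := hfin.toFinset)
    intro n hn
    exact Set.indicator_of_notMem (by simpa using hn) b
end

section
/- Suppose (aₙ) and (bₙ) are strictly positive, aₙ is non-increasing, aₙ → 0, aₙ/bₙ → 0, and ∑ bₙ = ∞. Then for every bijection f : ℕ → ℕ there exists a set A ⊆ ℕ such that ∑_{n∈A} bₙ diverges but ∑_{n∈f(A)} aₙ converges. Consequently, ℕ_{aₙ} and ℕ_{bₙ} are not homeomorphic. -/
open Set Filter Topology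

section Aux
open Finset


lemma key_div (a b : ℕ → ℝ) (f : ℕ → ℕ)
    (ha : ∀ n, 0 < a n) (hb : ∀ n, 0 < b n) (hmono : Antitone a)
    (ha0 : Tendsto a atTop (𝓝 0))
    (hab : Tendsto (fun n => a n / b n) atTop (𝓝 0))
    (hbdiv : ¬ Summable b) (hf : Function.Injective f)
    (ε : ℝ) (hε : 0 < ε) :
    ¬ Summable ({n | a (f n) ≤ ε * b n ∧ a (f n) ≤ ε}.indicator b) := by
  classical
  set A : Set ℕ := {n | a (f n) ≤ ε * b n ∧ a (f n) ≤ ε} with hA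
  obtain ⟨N₁, hN₁⟩ : ∃ N, ∀ n ≥ N, a n ≤ ε / 2 * b n := by
    have h2 : (0:ℝ) < ε / 2 := by positivity
    obtain ⟨N, hN⟩ := eventually_atTop.mp (hab.eventually (eventually_lt_nhds h2))
    refine ⟨N, fun n hn => ?_⟩
    have := hN n hn
    rw [div_lt_iff₀ (hb n)] at this
    linarith
  obtain ⟨N₂, hN₂⟩ : ∃ N, ∀ n ≥ N, a (f n) ≤ ε := by
    have hfc : Tendsto f atTop atTop := hf.nat_tendsto_atTop
    exact eventually_atTop.mp ((ha0.comp hfc).eventually (eventually_le_nhds hε))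
  set N := max N₁ N₂ with hNdef
  intro hsum
  have hbtop : Tendsto (fun M => ∑ n ∈ range M, b n) atTop atTop :=
    (not_summable_iff_tendsto_nat_atTop_of_nonneg (fun n => (hb n).le)).mp hbdiv
  set T := ∑' n, A.indicator b n with hT
  set Ka := ∑ m ∈ range N, a m with hKa
  set Kb := ∑ n ∈ range N, b n with hKb
  have hT0 : 0 ≤ T := tsum_nonneg (fun n => Set.indicator_nonneg (fun i _ => (hb i).le) n)
  have hKa0 : 0 ≤ Ka := Finset.sum_nonneg fun i _ => (ha i).le
  have hKb0 : 0 ≤ Kb := Finset.sum_nonneg fun i _ => (hb i).le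
  have claim : ∀ M, ∑ n ∈ range M, b n ≤ 2 * (T + Kb + Ka / ε) := by
    intro M
    rcases le_or_gt M N with hMN | hMN
    · have h1 : ∑ n ∈ range M, b n ≤ Kb :=
        Finset.sum_le_sum_of_subset_of_nonneg (Finset.range_subset_range.mpr hMN)
          (fun i _ _ => (hb i).le)
      nlinarith [div_nonneg hKa0 hε.le]
    have hsplit : ∑ n ∈ range M, b n
        = ∑ n ∈ (range M).filter (· ∈ A), b n + ∑ n ∈ (range M).filter (· ∉ A), b n :=
      (Finset.sum_filter_add_sum_filter_not _ _ _).symm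
    have h1 : ∑ n ∈ (range M).filter (· ∈ A), b n ≤ T := by
      have heq : ∑ n ∈ (range M).filter (· ∈ A), b n
          = ∑ n ∈ range M, A.indicator b n := by
        rw [Finset.sum_filter]
        exact Finset.sum_congr rfl fun n _ => by simp [Set.indicator_apply]
      rw [heq]
      exact hsum.sum_le_tsum _ (fun i _ => Set.indicator_nonneg (fun j _ => (hb j).le) i)
    -- on the bad tail set, ε * b n < a (f n) and f n < n
    have hbad : ∀ n ∈ (Finset.Ico N M).filter (· ∉ A), ε * b n < a (f n) ∧ f n < n := by
      intro n hn
      simp only [Finset.mem_filter, Finset.mem_Ico] at hn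
      obtain ⟨⟨hNn, hnM⟩, hnA⟩ := hn
      have hfn : a (f n) ≤ ε := hN₂ n (le_trans (le_max_right _ _) hNn)
      have hgt : ε * b n < a (f n) := by
        by_contra hle
        exact hnA ⟨le_of_not_gt hle, hfn⟩
      refine ⟨hgt, ?_⟩
      by_contra hge
      push_neg at hge
      have h3 : a (f n) ≤ a n := hmono hge
      have han : a n ≤ ε / 2 * b n := hN₁ n (le_trans (le_max_left _ _) hNn)
      nlinarith [hb n]
    have himg : ∑ n ∈ (Finset.Ico N M).filter (· ∉ A), a (f n) ≤ ∑ m ∈ range M, a m := by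
      have himage := Finset.sum_image (s := (Finset.Ico N M).filter (· ∉ A)) (f := a)
        (g := f) (fun x _ y _ h => hf h)
      refine le_trans (le_of_eq himage.symm) ?_
      refine Finset.sum_le_sum_of_subset_of_nonneg ?_ (fun i _ _ => (ha i).le)
      intro m hm
      simp only [Finset.mem_image] at hm
      obtain ⟨n, hn, rfl⟩ := hm
      have h4 := (hbad n hn).2
      have hnM : n < M := (Finset.mem_Ico.mp (Finset.mem_filter.mp hn).1).2
      exact Finset.mem_range.mpr (lt_trans h4 hnM)
    have hsum_a : ∑ m ∈ range M, a m ≤ Ka + ε / 2 * ∑ n ∈ range M, b n := by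
      have hdec : ∑ m ∈ range M, a m = Ka + ∑ m ∈ Finset.Ico N M, a m := by
        rw [hKa, Finset.sum_range_add_sum_Ico _ hMN.le]
      have htail : ∑ m ∈ Finset.Ico N M, a m ≤ ε / 2 * ∑ n ∈ Finset.Ico N M, b n := by
        rw [Finset.mul_sum]
        exact Finset.sum_le_sum fun n hn => hN₁ n (le_trans (le_max_left _ _)
          (Finset.mem_Ico.mp hn).1)
      have htail2 : ∑ n ∈ Finset.Ico N M, b n ≤ ∑ n ∈ range M, b n := by
        refine Finset.sum_le_sum_of_subset_of_nonneg ?_ (fun i _ _ => (hb i).le)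
        intro n hn
        exact Finset.mem_range.mpr (Finset.mem_Ico.mp hn).2
      have := mul_le_mul_of_nonneg_left htail2 (by positivity : (0:ℝ) ≤ ε / 2)
      linarith
    -- bound the bad-set b sum
    have hbadb : ε * ∑ n ∈ (Finset.Ico N M).filter (· ∉ A), b n
        ≤ ∑ n ∈ (Finset.Ico N M).filter (· ∉ A), a (f n) := by
      rw [Finset.mul_sum]
      exact Finset.sum_le_sum fun n hn => (hbad n hn).1.le
    have h2 : ∑ n ∈ (range M).filter (· ∉ A), b n
        ≤ Kb + ∑ n ∈ (Finset.Ico N M).filter (· ∉ A), b n := by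
      have hsub : (range M).filter (· ∉ A) ⊆ range N ∪ (Finset.Ico N M).filter (· ∉ A) := by
        intro n hn
        simp only [Finset.mem_filter, Finset.mem_range] at hn
        rcases lt_or_ge n N with h | h
        · exact Finset.mem_union_left _ (Finset.mem_range.mpr h)
        · refine Finset.mem_union_right _ ?_
          simp only [Finset.mem_filter, Finset.mem_Ico]
          exact ⟨⟨h, hn.1⟩, hn.2⟩
      calc ∑ n ∈ (range M).filter (· ∉ A), b n
          ≤ ∑ n ∈ range N ∪ (Finset.Ico N M).filter (· ∉ A), b n :=
            Finset.sum_le_sum_of_subset_of_nonneg hsub (fun i _ _ => (hb i).le)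
        _ ≤ Kb + ∑ n ∈ (Finset.Ico N M).filter (· ∉ A), b n := by
            have hdisj : Disjoint (range N) ((Finset.Ico N M).filter (· ∉ A)) := by
              simp only [Finset.disjoint_left, Finset.mem_range, Finset.mem_filter,
                Finset.mem_Ico]
              intro n hn h
              exact absurd h.1.1 (not_le.mpr hn)
            rw [hKb]
            exact (Finset.sum_union hdisj).le
    -- combine
    have hchain : ε * ∑ n ∈ (Finset.Ico N M).filter (· ∉ A), b n
        ≤ Ka + ε / 2 * ∑ n ∈ range M, b n := le_trans hbadb (le_trans himg hsum_a)
    have hbadb2 : ∑ n ∈ (Finset.Ico N M).filter (· ∉ A), b n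
        ≤ (Ka + ε / 2 * ∑ n ∈ range M, b n) / ε := by
      rw [le_div_iff₀ hε, mul_comm]
      exact hchain
    have hdivexp : (Ka + ε / 2 * ∑ n ∈ range M, b n) / ε
        = Ka / ε + (∑ n ∈ range M, b n) / 2 := by
      field_simp
    nlinarith [hsplit, h1, h2, hbadb2, hdivexp]
  obtain ⟨M, hM⟩ := (hbtop.eventually_gt_atTop (2 * (T + Kb + Ka / ε))).exists
  exact absurd (claim M) (not_le.mpr hM)

lemma exists_good_set (a b : ℕ → ℝ) (f : ℕ → ℕ)
    (ha : ∀ n, 0 < a n) (hb : ∀ n, 0 < b n) (hmono : Antitone a)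
    (ha0 : Tendsto a atTop (𝓝 0))
    (hab : Tendsto (fun n => a n / b n) atTop (𝓝 0))
    (hbdiv : ¬ Summable b) (hf : Function.Bijective f) :
    ∃ A : Set ℕ, ¬ Summable (A.indicator b) ∧ Summable ((f '' A).indicator a) ∧ (0:ℕ) ∉ A := by
  classical
  set Aε : ℝ → Set ℕ := fun ε => {n | a (f n) ≤ ε * b n ∧ a (f n) ≤ ε} with hAε
  have hfilter : ∀ (s : Finset ℕ) (S : Set ℕ) (g : ℕ → ℝ),
      ∑ n ∈ s.filter (· ∈ S), g n = ∑ n ∈ s, S.indicator g n := by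
    intro s S g
    rw [Finset.sum_filter]
    exact Finset.sum_congr rfl fun n _ => by simp [Set.indicator_apply]
  have hkey : ∀ ε : ℝ, 0 < ε → ¬ Summable ((Aε ε).indicator b) := fun ε hε =>
    key_div a b f ha hb hmono ha0 hab hbdiv hf.injective ε hε
  have htop : ∀ ε : ℝ, 0 < ε →
      Tendsto (fun M => ∑ n ∈ range M, (Aε ε).indicator b n) atTop atTop := fun ε hε =>
    (not_summable_iff_tendsto_nat_atTop_of_nonneg
      (fun n => Set.indicator_nonneg (fun i _ => (hb i).le) n)).mp (hkey ε hε)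
  have hex : ∀ k m₀ : ℕ, ∃ M,
      1 ≤ ∑ n ∈ (Finset.Ico m₀ M).filter (· ∈ Aε ((1/2)^k)), b n := by
    intro k m₀
    have hεk : (0:ℝ) < (1/2)^k := by positivity
    obtain ⟨M, hM1, hM2⟩ := (((htop _ hεk).eventually_ge_atTop
      (∑ n ∈ range m₀, (Aε ((1/2)^k)).indicator b n + 1)).and (eventually_ge_atTop m₀)).exists
    refine ⟨M, ?_⟩
    have heq : ∑ n ∈ (Finset.Ico m₀ M).filter (· ∈ Aε ((1/2)^k)), b n
        = ∑ n ∈ Finset.Ico m₀ M, (Aε ((1/2)^k)).indicator b n := by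
      rw [Finset.sum_filter]
      exact Finset.sum_congr rfl fun n _ => by simp [Set.indicator_apply]
    rw [heq, Finset.sum_Ico_eq_sub _ hM2]
    linarith
  obtain ⟨m, hm0, hmS⟩ : ∃ m : ℕ → ℕ, m 0 = 1 ∧ ∀ k, m (k+1) = Nat.find (hex k (m k)) :=
    ⟨fun k => Nat.rec 1 (fun k mk => Nat.find (hex k mk)) k, rfl, fun _ => rfl⟩
  set S : ℕ → Finset ℕ := fun k => (Finset.Ico (m k) (m (k+1))).filter (· ∈ Aε ((1/2)^k))
    with hS
  have hSsum : ∀ k, 1 ≤ ∑ n ∈ S k, b n := by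
    intro k
    have := Nat.find_spec (hex k (m k))
    rwa [← hmS k] at this
  have hmlt : ∀ k, m k < m (k+1) := by
    intro k
    by_contra h
    push_neg at h
    have h1 := hSsum k
    rw [hS] at h1
    simp only [Finset.Ico_eq_empty (not_lt.mpr h), Finset.filter_empty,
      Finset.sum_empty] at h1
    linarith
  have hsm : StrictMono m := strictMono_nat_of_lt_succ hmlt
  have hm_ge_k : ∀ k, k ≤ m k := fun k => hsm.le_apply
  have hm_ge_1 : ∀ k, 1 ≤ m k := fun k => hm0 ▸ hsm.monotone (Nat.zero_le k)
  -- membership facts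
  have hmemS : ∀ k n, n ∈ S k → m k ≤ n ∧ n < m (k+1) ∧ n ∈ Aε ((1/2)^k) := by
    intro k n hn
    rw [hS] at hn
    simp only [Finset.mem_filter, Finset.mem_Ico] at hn
    exact ⟨hn.1.1, hn.1.2, hn.2⟩
  have hdisj : ∀ k l, k < l → Disjoint (S k) (S l) := by
    intro k l hkl
    rw [Finset.disjoint_left]
    intro n hnk hnl
    have h1 := (hmemS k n hnk).2.1
    have h2 := (hmemS l n hnl).1
    have h3 : m (k+1) ≤ m l := hsm.monotone hkl
    omega
  have hpd : ∀ (F : Finset ℕ), ((F : Set ℕ)).PairwiseDisjoint S := by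
    intro F i _ j _ hij
    rcases lt_or_gt_of_ne hij with h | h
    · exact hdisj i j h
    · exact (hdisj j i h).symm
  -- block bound for a ∘ f
  have hblock : ∀ k, ∑ n ∈ S k, a (f n) ≤ 2 * (1/2)^k := by
    intro k
    set ε : ℝ := (1/2)^k with hε'
    have hε : (0:ℝ) < ε := by positivity
    obtain ⟨M₀, hM₀⟩ : ∃ M₀, m (k+1) = M₀ + 1 := ⟨m (k+1) - 1, by have := hmlt k; omega⟩
    have hmkM₀ : m k ≤ M₀ := by have := hmlt k; omega
    have hmin : ∑ n ∈ (Finset.Ico (m k) M₀).filter (· ∈ Aε ε), b n < 1 := by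
      have hlt : M₀ < Nat.find (hex k (m k)) := by rw [← hmS k]; omega
      have := Nat.find_min (hex k (m k)) hlt
      exact lt_of_not_ge this
    have hico : Finset.Ico (m k) (m (k+1)) = insert M₀ (Finset.Ico (m k) M₀) := by
      rw [hM₀]
      exact Nat.Ico_succ_right_eq_insert_Ico hmkM₀
    have hsum_small : ∑ n ∈ (Finset.Ico (m k) M₀).filter (· ∈ Aε ε), a (f n) ≤ ε := by
      have h1 : ∑ n ∈ (Finset.Ico (m k) M₀).filter (· ∈ Aε ε), a (f n)
          ≤ ∑ n ∈ (Finset.Ico (m k) M₀).filter (· ∈ Aε ε), ε * b n :=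
        Finset.sum_le_sum fun n hn => (Finset.mem_filter.mp hn).2.1
      rw [← Finset.mul_sum] at h1
      nlinarith
    rw [hS]
    simp only [hico, Finset.filter_insert]
    by_cases hP : M₀ ∈ Aε ε
    · rw [if_pos hP]
      rw [Finset.sum_insert (by simp [Finset.mem_filter])]
      have : a (f M₀) ≤ ε := hP.2
      linarith
    · rw [if_neg hP]
      linarith
  -- the set A
  set A : Set ℕ := ⋃ k, (S k : Set ℕ) with hAdef
  have hmemA : ∀ n, n ∈ A ↔ ∃ k, n ∈ S k := by
    intro n
    simp [hAdef]
  refine ⟨A, ?_, ?_, ?_⟩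
  · -- not summable
    intro hsum
    have hbound : ∀ K : ℕ, (K:ℝ) ≤ ∑' n, A.indicator b n := by
      intro K
      have h1 : (K:ℝ) ≤ ∑ k ∈ range K, ∑ n ∈ S k, b n := by
        calc (K:ℝ) = ∑ _k ∈ range K, (1:ℝ) := by simp
          _ ≤ _ := Finset.sum_le_sum fun k _ => hSsum k
      have h2 : ∑ k ∈ range K, ∑ n ∈ S k, b n = ∑ n ∈ (range K).biUnion S, b n :=
        (Finset.sum_biUnion (hpd (range K))).symm
      have h3 : ∑ n ∈ (range K).biUnion S, b n = ∑ n ∈ (range K).biUnion S, A.indicator b n := by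
        refine Finset.sum_congr rfl fun n hn => ?_
        obtain ⟨k, _, hk⟩ := Finset.mem_biUnion.mp hn
        have : n ∈ A := (hmemA n).mpr ⟨k, hk⟩
        rw [Set.indicator_of_mem this]
      have h4 : ∑ n ∈ (range K).biUnion S, A.indicator b n ≤ ∑' n, A.indicator b n :=
        hsum.sum_le_tsum _ (fun i _ => Set.indicator_nonneg (fun j _ => (hb j).le) i)
      linarith
    obtain ⟨K, hK⟩ := exists_nat_gt (∑' n, A.indicator b n)
    exact absurd (hbound K) (not_le.mpr hK)
  · -- summable
    have hsum2 : Summable (A.indicator (fun n => a (f n))) := by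
      refine summable_of_sum_range_le (c := 4)
        (fun n => Set.indicator_nonneg (fun i _ => (ha (f i)).le) n) ?_
      intro M
      have h0 : ∑ n ∈ range M, A.indicator (fun n => a (f n)) n
          = ∑ n ∈ (range M).filter (· ∈ A), a (f n) := by
        rw [Finset.sum_filter]
        exact Finset.sum_congr rfl fun n _ => by simp [Set.indicator_apply]
      have hsub : (range M).filter (· ∈ A) ⊆ (range M).biUnion S := by
        intro n hn
        simp only [Finset.mem_filter, Finset.mem_range] at hn
        obtain ⟨k, hk⟩ := (hmemA n).mp hn.2
        refine Finset.mem_biUnion.mpr ⟨k, ?_, hk⟩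
        have h5 := (hmemS k n hk).1
        have h6 := hm_ge_k k
        exact Finset.mem_range.mpr (by omega)
      have h7 : ∑ n ∈ (range M).filter (· ∈ A), a (f n)
          ≤ ∑ n ∈ (range M).biUnion S, a (f n) :=
        Finset.sum_le_sum_of_subset_of_nonneg hsub (fun i _ _ => (ha (f i)).le)
      have h8 : ∑ n ∈ (range M).biUnion S, a (f n) = ∑ k ∈ range M, ∑ n ∈ S k, a (f n) :=
        Finset.sum_biUnion (hpd (range M))
      have h9 : ∑ k ∈ range M, ∑ n ∈ S k, a (f n) ≤ ∑ k ∈ range M, 2 * (1/2:ℝ)^k :=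
        Finset.sum_le_sum fun k _ => hblock k
      have h10 : ∑ k ∈ range M, 2 * (1/2:ℝ)^k ≤ 4 := by
        rw [← Finset.mul_sum]
        have := sum_geometric_two_le M
        linarith
      rw [h0]
      linarith
    set e : ℕ ≃ ℕ := Equiv.ofBijective f hf with he
    have heq : ((f '' A).indicator a) ∘ ⇑e = A.indicator (fun n => a (f n)) := by
      funext n
      simp only [Function.comp_apply, he, Equiv.ofBijective_apply]
      by_cases hn : n ∈ A
      · rw [Set.indicator_of_mem hn, Set.indicator_of_mem (Set.mem_image_of_mem f hn)]
      · rw [Set.indicator_of_notMem hn, Set.indicator_of_notMem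
          (fun hc => hn ((hf.injective.mem_set_image).mp hc))]
    exact e.summable_iff.mp (heq ▸ hsum2)
  · -- 0 ∉ A
    intro h0
    obtain ⟨k, hk⟩ := (hmemA 0).mp h0
    have := (hmemS k 0 hk).1
    have := hm_ge_1 k
    omega

end Aux

lemma homeo_contra {X Y : Type} [TopologicalSpace X] [TopologicalSpace Y]
    (a : X → ℝ) (b : Y → ℝ) (h : X ≃ₜ Y) (g : Y → X) (hg : ∀ y, h (g y) = y)
    (hca : ∀ s : Set X, Summable (s.indicator a) → IsClosed s)
    (hcb : ∀ s : Set Y, IsClosed s → Summable (s.indicator b) ∨ s = Set.univ)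
    (A : Set Y) (hA1 : ¬ Summable (A.indicator b)) (hA2 : Summable ((g '' A).indicator a))
    (hA3 : A ≠ Set.univ) : False := by
  have hB : IsClosed (g '' A) := hca _ hA2
  have h1 : IsClosed (⇑h '' (g '' A)) := h.isClosed_image.mpr hB
  have himg : ⇑h '' (g '' A) = A := by
    rw [Set.image_image]
    simp only [hg, Set.image_id']
  rw [himg] at h1
  rcases hcb A h1 with hc | hc
  · exact hA1 hc
  · exact hA3 hc


/-- If `aₙ` is non-increasing with `aₙ → 0`, `aₙ/bₙ → 0`, and `∑ bₙ = ∞`, then for every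
bijection `f : ℕ → ℕ` there is a set `A` with `∑_A bₙ = ∞` but `∑_{f(A)} aₙ < ∞`.
Consequently, `ℕ_{aₙ}` and `ℕ_{bₙ}` are not homeomorphic. -/
theorem not_homeomorphic_of_ratio_tendsto_zero (a b : ℕ → ℝ)
    (ha : ∀ n, 0 < a n) (hb : ∀ n, 0 < b n) (hmono : Antitone a)
    (ha0 : Tendsto a atTop (𝓝 0)) (hab : Tendsto (fun n => a n / b n) atTop (𝓝 0))
    (hbdiv : ¬ Summable b) :
    (∀ f : ℕ → ℕ, Function.Bijective f →
      ∃ A : Set ℕ, ¬ Summable (A.indicator b) ∧ Summable ((f '' A).indicator a)) ∧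
    IsEmpty (@Homeomorph ℕ ℕ (seriesTopology a) (seriesTopology b)) := by
  have hmain : ∀ f : ℕ → ℕ, Function.Bijective f →
      ∃ A : Set ℕ, ¬ Summable (A.indicator b) ∧ Summable ((f '' A).indicator a) ∧ (0:ℕ) ∉ A :=
    fun f hf => exists_good_set a b f ha hb hmono ha0 hab hbdiv hf
  constructor
  · intro f hf
    obtain ⟨A, h1, h2, _⟩ := hmain f hf
    exact ⟨A, h1, h2⟩
  · refine ⟨fun h => ?_⟩
    set e : ℕ ≃ ℕ := @Homeomorph.toEquiv ℕ ℕ (seriesTopology a) (seriesTopology b) h with he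
    obtain ⟨A, hA1, hA2, hA0⟩ := hmain (⇑e.symm) e.symm.bijective
    refine @homeo_contra ℕ ℕ (seriesTopology a) (seriesTopology b) a b h
      (⇑e.symm) (fun y => e.apply_symm_apply y)
      (fun s hs => (isClosed_seriesTopology_iff a s).mpr (Or.inl hs))
      (fun s hs => (isClosed_seriesTopology_iff b s).mp hs)
      A hA1 hA2 (fun hc => ?_)
    rw [hc] at hA0
    exact hA0 (Set.mem_univ 0)
end

section
/- Suppose (aₙ) and (bₙ) are strictly positive, ∑ bₙ = ∞, bₙ → 0, and aₙ/bₙ → 0. Then there exists A ⊆ ℕ such that ∑_{n∈A} bₙ diverges while ∑_{n∈A} aₙ converges. -/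
open Set Filter Topology

/-- If `∑ bₙ = ∞`, `bₙ → 0` and `aₙ/bₙ → 0`, then there is a set `A ⊆ ℕ` on which
`∑ bₙ` diverges while `∑ aₙ` converges. -/
theorem exists_subset_div_conv (a b : ℕ → ℝ)
    (ha : ∀ n, 0 < a n) (hb : ∀ n, 0 < b n) (hbdiv : ¬ Summable b)
    (hb0 : Tendsto b atTop (𝓝 0)) (hab : Tendsto (fun n => a n / b n) atTop (𝓝 0)) :
    ∃ A : Set ℕ, ¬ Summable (A.indicator b) ∧ Summable (A.indicator a) := by
  classical
  obtain ⟨N₀, hN₀⟩ : ∃ N₀, ∀ n ≥ N₀, b n ≤ 1 := by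
    have h := hb0.eventually_lt_const one_pos
    rw [eventually_atTop] at h
    obtain ⟨N₀, h⟩ := h
    exact ⟨N₀, fun n hn => (h n hn).le⟩
  have hMex : ∀ k : ℕ, ∃ m, ∀ n ≥ m, a n ≤ b n * (1/2:ℝ)^k := by
    intro k
    have hpos : (0:ℝ) < (1/2:ℝ)^k := by positivity
    have h := hab.eventually_lt_const hpos
    rw [eventually_atTop] at h
    obtain ⟨m, h⟩ := h
    refine ⟨m, fun n hn => ?_⟩
    have h2 := h n hn
    rw [div_lt_iff₀ (hb n)] at h2
    linarith
  choose M hM using hMex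
  have hfind : ∀ s : ℕ, ∃ m, 1 ≤ ∑ i ∈ Finset.Ico s m, b i := by
    intro s
    by_contra h
    push_neg at h
    apply hbdiv
    apply summable_of_sum_range_le (c := (∑ i ∈ Finset.range s, b i) + 1)
      (fun n => (hb n).le)
    intro n
    rcases le_or_gt n s with hns | hsn
    · have h1 : ∑ i ∈ Finset.range n, b i ≤ ∑ i ∈ Finset.range s, b i :=
        Finset.sum_le_sum_of_subset_of_nonneg
          (Finset.range_subset_range.2 hns) (fun i _ _ => (hb i).le)
      linarith
    · have heq : ∑ i ∈ Finset.range s, b i + ∑ i ∈ Finset.Ico s n, b i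
          = ∑ i ∈ Finset.range n, b i := by
        simp only [Finset.range_eq_Ico]
        exact Finset.sum_Ico_consecutive _ (Nat.zero_le s) hsn.le
      linarith [h n]
  set endp : ℕ → ℕ := fun s => Nat.find (hfind s) with hendp
  have hendp_spec : ∀ s, 1 ≤ ∑ i ∈ Finset.Ico s (endp s), b i :=
    fun s => Nat.find_spec (hfind s)
  have hendp_min : ∀ s m, m < endp s → ∑ i ∈ Finset.Ico s m, b i < 1 := by
    intro s m hm
    have h := Nat.find_min (hfind s) hm
    push_neg at h
    exact h
  have hendp_gt : ∀ s, s < endp s := by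
    intro s
    by_contra h
    push_neg at h
    have h1 := hendp_spec s
    rw [Finset.Ico_eq_empty (by omega), Finset.sum_empty] at h1
    linarith
  have hendp_le2 : ∀ s, N₀ ≤ s → ∑ i ∈ Finset.Ico s (endp s), b i ≤ 2 := by
    intro s hs
    obtain ⟨m, hm⟩ : ∃ m, endp s = m + 1 := ⟨endp s - 1, by have := hendp_gt s; omega⟩
    have hsm : s ≤ m := by have := hendp_gt s; omega
    have h1 : ∑ i ∈ Finset.Ico s m, b i < 1 := hendp_min s m (by omega)
    have h2 : b m ≤ 1 := hN₀ m (le_trans hs hsm)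
    rw [hm, Finset.sum_Ico_succ_top hsm]
    linarith
  obtain ⟨N, hNz, hNs⟩ : ∃ N : ℕ → ℕ, N 0 = max N₀ (max (M 0) 0) ∧
      ∀ k, N (k+1) = max (endp (N k)) (max N₀ (max (M (k+1)) (k+1))) :=
    ⟨fun k => Nat.rec (max N₀ (max (M 0) 0))
      (fun k Nk => max (endp Nk) (max N₀ (max (M (k+1)) (k+1)))) k, rfl, fun k => rfl⟩
  set E : ℕ → ℕ := fun k => endp (N k) with hE
  have hN₀le : ∀ k, N₀ ≤ N k := by
    intro k
    cases k with
    | zero => rw [hNz]; exact le_max_left _ _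
    | succ k => rw [hNs]; exact le_trans (le_max_left _ _) (le_max_right _ _)
  have hMle : ∀ k, M k ≤ N k := by
    intro k
    cases k with
    | zero => rw [hNz]; exact le_trans (le_max_left _ _) (le_max_right _ _)
    | succ k =>
        rw [hNs]
        exact le_trans (le_trans (le_max_left _ _) (le_max_right _ _)) (le_max_right _ _)
  have hkle : ∀ k, k ≤ N k := by
    intro k
    cases k with
    | zero => exact Nat.zero_le _
    | succ k =>
        rw [hNs]
        exact le_trans (le_trans (le_max_right _ _) (le_max_right _ _)) (le_max_right _ _)
  have hNE : ∀ k, N k < E k := fun k => hendp_gt (N k)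
  have hEN : ∀ k, E k ≤ N (k+1) := fun k => by rw [hNs]; exact le_max_left _ _
  have hNmono : StrictMono N :=
    strictMono_nat_of_lt_succ fun k => lt_of_lt_of_le (hNE k) (hEN k)
  set A : Set ℕ := ⋃ k, Set.Ico (N k) (E k) with hA
  have hblock_b_lb : ∀ k, 1 ≤ ∑ i ∈ Finset.Ico (N k) (E k), b i := fun k => hendp_spec (N k)
  have hblock_b_ub : ∀ k, ∑ i ∈ Finset.Ico (N k) (E k), b i ≤ 2 :=
    fun k => hendp_le2 _ (hN₀le k)
  have hblock_a : ∀ k, ∑ i ∈ Finset.Ico (N k) (E k), a i ≤ 2 * (1/2:ℝ)^k := by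
    intro k
    have hpos : (0:ℝ) ≤ (1/2:ℝ)^k := by positivity
    calc ∑ i ∈ Finset.Ico (N k) (E k), a i
        ≤ ∑ i ∈ Finset.Ico (N k) (E k), b i * (1/2:ℝ)^k :=
          Finset.sum_le_sum fun i hi =>
            hM k i (le_trans (hMle k) (Finset.mem_Ico.1 hi).1)
      _ = (∑ i ∈ Finset.Ico (N k) (E k), b i) * (1/2:ℝ)^k := by
          rw [Finset.sum_mul]
      _ ≤ 2 * (1/2:ℝ)^k := by nlinarith [hblock_b_ub k]
  have hmemA : ∀ k i, N k ≤ i → i < E k → i ∈ A :=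
    fun k i h1 h2 => Set.mem_iUnion.2 ⟨k, Set.mem_Ico.2 ⟨h1, h2⟩⟩
  have hnotA : ∀ K i, E K ≤ i → i < N (K+1) → i ∉ A := by
    intro K i h1 h2 hi
    obtain ⟨j, hj⟩ := Set.mem_iUnion.1 hi
    obtain ⟨hj1, hj2⟩ := Set.mem_Ico.1 hj
    rcases le_or_gt j K with hjK | hKj
    · have hEE : E j ≤ E K := by
        rcases eq_or_lt_of_le hjK with rfl | hlt
        · exact le_rfl
        · exact le_trans (hEN j) (le_trans (hNmono.monotone hlt) (hNE K).le)
      omega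
    · have h3 : N (K+1) ≤ N j := hNmono.monotone hKj
      omega
  have hnotA0 : ∀ i, i < N 0 → i ∉ A := by
    intro i h hi
    obtain ⟨j, hj⟩ := Set.mem_iUnion.1 hi
    obtain ⟨hj1, _⟩ := Set.mem_Ico.1 hj
    have := hNmono.monotone (Nat.zero_le j)
    omega
  have ha_nonneg : ∀ i, 0 ≤ A.indicator a i :=
    fun i => Set.indicator_nonneg (fun j _ => (ha j).le) i
  have hb_nonneg : ∀ i, 0 ≤ A.indicator b i :=
    fun i => Set.indicator_nonneg (fun j _ => (hb j).le) i
  have hind_a_le : ∀ i, A.indicator a i ≤ a i :=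
    fun i => Set.indicator_le_self' (fun j _ => (ha j).le) i
  -- key induction for a
  have key_a : ∀ K, ∑ i ∈ Finset.range (E K), A.indicator a i ≤ 4 - 2*(1/2:ℝ)^K := by
    intro K
    induction K with
    | zero =>
        have hsplit : ∑ i ∈ Finset.range (E 0), A.indicator a i
            = ∑ i ∈ Finset.Ico 0 (N 0), A.indicator a i
              + ∑ i ∈ Finset.Ico (N 0) (E 0), A.indicator a i := by
          simp only [Finset.range_eq_Ico]
          rw [← Finset.sum_Ico_consecutive _ (Nat.zero_le (N 0)) (hNE 0).le]
        have hz : ∑ i ∈ Finset.Ico 0 (N 0), A.indicator a i = 0 :=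
          Finset.sum_eq_zero fun i hi =>
            Set.indicator_of_notMem (hnotA0 i (Finset.mem_Ico.1 hi).2) a
        have hle : ∑ i ∈ Finset.Ico (N 0) (E 0), A.indicator a i
            ≤ ∑ i ∈ Finset.Ico (N 0) (E 0), a i :=
          Finset.sum_le_sum fun i _ => hind_a_le i
        have := hblock_a 0
        rw [hsplit, hz]
        simp only [pow_zero] at this ⊢
        linarith
    | succ K ih =>
        have hEE : E K ≤ E (K+1) := le_trans (hEN K) (hNE (K+1)).le
        have hsplit1 : ∑ i ∈ Finset.range (E (K+1)), A.indicator a i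
            = ∑ i ∈ Finset.range (E K), A.indicator a i
              + ∑ i ∈ Finset.Ico (E K) (E (K+1)), A.indicator a i := by
          simp only [Finset.range_eq_Ico]
          rw [← Finset.sum_Ico_consecutive _ (Nat.zero_le (E K)) hEE]
        have hsplit2 : ∑ i ∈ Finset.Ico (E K) (E (K+1)), A.indicator a i
            = ∑ i ∈ Finset.Ico (E K) (N (K+1)), A.indicator a i
              + ∑ i ∈ Finset.Ico (N (K+1)) (E (K+1)), A.indicator a i := by
          rw [← Finset.sum_Ico_consecutive _ (hEN K) (hNE (K+1)).le]
        have hz : ∑ i ∈ Finset.Ico (E K) (N (K+1)), A.indicator a i = 0 :=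
          Finset.sum_eq_zero fun i hi =>
            Set.indicator_of_notMem
              (hnotA K i (Finset.mem_Ico.1 hi).1 (Finset.mem_Ico.1 hi).2) a
        have hle : ∑ i ∈ Finset.Ico (N (K+1)) (E (K+1)), A.indicator a i
            ≤ 2 * (1/2:ℝ)^(K+1) :=
          le_trans (Finset.sum_le_sum fun i _ => hind_a_le i) (hblock_a (K+1))
        have hpow : (1/2:ℝ)^(K+1) = (1/2:ℝ)^K * (1/2) := pow_succ _ _
        rw [hsplit1, hsplit2, hz]
        rw [hpow] at hle ⊢
        linarith
  -- key induction for b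
  have key_b : ∀ K : ℕ, (K + 1 : ℝ) ≤ ∑ i ∈ Finset.range (E K), A.indicator b i := by
    intro K
    induction K with
    | zero =>
        have hsub : Finset.Ico (N 0) (E 0) ⊆ Finset.range (E 0) := by
          intro i hi
          rw [Finset.mem_range]
          exact (Finset.mem_Ico.1 hi).2
        have heq : ∑ i ∈ Finset.Ico (N 0) (E 0), A.indicator b i
            = ∑ i ∈ Finset.Ico (N 0) (E 0), b i :=
          Finset.sum_congr rfl fun i hi =>
            Set.indicator_of_mem
              (hmemA 0 i (Finset.mem_Ico.1 hi).1 (Finset.mem_Ico.1 hi).2) b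
        have hle : ∑ i ∈ Finset.Ico (N 0) (E 0), A.indicator b i
            ≤ ∑ i ∈ Finset.range (E 0), A.indicator b i :=
          Finset.sum_le_sum_of_subset_of_nonneg hsub fun i _ _ => hb_nonneg i
        have := hblock_b_lb 0
        push_cast
        linarith [heq ▸ hle]
    | succ K ih =>
        have hEE : E K ≤ E (K+1) := le_trans (hEN K) (hNE (K+1)).le
        have hsplit1 : ∑ i ∈ Finset.range (E (K+1)), A.indicator b i
            = ∑ i ∈ Finset.range (E K), A.indicator b i
              + ∑ i ∈ Finset.Ico (E K) (E (K+1)), A.indicator b i := by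
          simp only [Finset.range_eq_Ico]
          rw [← Finset.sum_Ico_consecutive _ (Nat.zero_le (E K)) hEE]
        have hsub : Finset.Ico (N (K+1)) (E (K+1)) ⊆ Finset.Ico (E K) (E (K+1)) := by
          intro i hi
          rw [Finset.mem_Ico] at hi ⊢
          exact ⟨le_trans (hEN K) hi.1, hi.2⟩
        have heq : ∑ i ∈ Finset.Ico (N (K+1)) (E (K+1)), A.indicator b i
            = ∑ i ∈ Finset.Ico (N (K+1)) (E (K+1)), b i :=
          Finset.sum_congr rfl fun i hi =>
            Set.indicator_of_mem
              (hmemA (K+1) i (Finset.mem_Ico.1 hi).1 (Finset.mem_Ico.1 hi).2) b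
        have hle : ∑ i ∈ Finset.Ico (N (K+1)) (E (K+1)), A.indicator b i
            ≤ ∑ i ∈ Finset.Ico (E K) (E (K+1)), A.indicator b i :=
          Finset.sum_le_sum_of_subset_of_nonneg hsub fun i _ _ => hb_nonneg i
        have h1 := hblock_b_lb (K+1)
        rw [hsplit1]
        push_cast
        push_cast at ih
        linarith [heq ▸ hle]
  refine ⟨A, ?_, ?_⟩
  · intro hsum
    obtain ⟨K, hK⟩ := exists_nat_gt (∑' i, A.indicator b i)
    have h1 := key_b K
    have h2 : ∑ i ∈ Finset.range (E K), A.indicator b i ≤ ∑' i, A.indicator b i :=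
      Summable.sum_le_tsum _ (fun i _ => hb_nonneg i) hsum
    have h3 : (K : ℝ) < (K : ℝ) + 1 := by linarith
    linarith
  · apply summable_of_sum_range_le (c := 4) ha_nonneg
    intro m
    have h1 : m ≤ E m := le_trans (hkle m) (hNE m).le
    calc ∑ i ∈ Finset.range m, A.indicator a i
        ≤ ∑ i ∈ Finset.range (E m), A.indicator a i :=
          Finset.sum_le_sum_of_subset_of_nonneg (Finset.range_subset_range.2 h1)
            fun i _ _ => ha_nonneg i
      _ ≤ 4 - 2*(1/2:ℝ)^m := key_a m
      _ ≤ 4 := by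
          have : (0:ℝ) ≤ (1/2:ℝ)^m := by positivity
          linarith
end
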